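/- Let n ≥ 1 and let M = Sⁿ be the free S-module with standard basis e₁, …, e_n. For a hermitian quadratic form (q, f) on M with values in R, define n×n matrices A(q), B(q) over R by A(q)_{ii} = q(e_i), A(q)_{ij} = f(e_i, e_j) for i ≠ j, and B(q)_{ij} = f(e_i, Π·e_j). Then the assignment q ↦ (A(q), B(q)) is a bijection from the set of hermitian quadratic forms on M with values in R onto the set of pairs (A, B) of n×n matrices over R such that A is symmetric, B + Bᵀ = t·Ã, and B_{ii} = t·A_{ii} for all i, where Ã is the matrix with Ã_{ij} = A_{ij} for i ≠ j and Ã_{ii} = 2·A_{ii}. -/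

import Mathlib

/-!
STATEMENT 11: Hermitian quadratic forms on the free module `Sⁿ` over the quadratic algebra
`S = R[Π] = R[T]/(T² - t·T + π)` correspond bijectively to pairs of `n×n` matrices `(A, B)`
over `R` with `A` symmetric, `B + Bᵀ = t·Ã` and `B_{ii} = t·A_{ii}`, via
`A_{ii} = q(eᵢ)`, `A_{ij} = f(eᵢ, eⱼ)` (`i ≠ j`), `B_{ij} = f(eᵢ, Π·eⱼ)`.
-/

open Polynomial

noncomputable section

/-- The quadratic `R`-algebra `S = R[Π] := R[T]/(T² - t·T + π)`. -/
abbrev Squad (R : Type) [CommRing R] (t π : R) : Type :=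
  AdjoinRoot (X ^ 2 - Polynomial.C t * X + Polynomial.C π)

/-- The image `Π` of `T` in `S = R[T]/(T² - t·T + π)`. -/
noncomputable def PiRoot (R : Type) [CommRing R] (t π : R) : Squad R t π :=
  AdjoinRoot.root _

/-- A hermitian quadratic form with values in `R` on a module `M` over
`S = R[T]/(T² - t·T + π)`, relative to the involution `σ` and the norm `Nrm` of `S`:
a function `q : M → R` together with a symmetric `R`-bilinear form `f : M × M → R`
satisfying `f(m,n) = q(m+n) - q(m) - q(n)`, `q(x·m) = N(x)·q(m)` and
`f(x·m, n) = f(m, σ(x)·n)`. -/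
structure HermitianQuadForm (R : Type) [CommRing R] (S : Type) [CommRing S] [Algebra R S]
    (σ : S → S) (Nrm : S → R) (M : Type) [AddCommGroup M] [Module S M] where
  q : M → R
  f : M → M → R
  f_symm : ∀ m n, f m n = f n m
  f_add_left : ∀ m m' n, f (m + m') n = f m n + f m' n
  f_smul_left : ∀ (r : R) (m n : M), f ((algebraMap R S r) • m) n = r * f m n
  polar : ∀ m n, f m n = q (m + n) - q m - q n
  q_smul : ∀ (x : S) (m : M), q (x • m) = Nrm x * q m
  f_conj : ∀ (x : S) (m n : M), f (x • m) n = f m (σ x • n)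

/-- The matrix `Ã` with `Ã_{ij} = A_{ij}` for `i ≠ j` and `Ã_{ii} = 2·A_{ii}`. -/
def tildeMat {R : Type} [CommRing R] {n : ℕ} (A : Matrix (Fin n) (Fin n) R) :
    Matrix (Fin n) (Fin n) R :=
  Matrix.of fun i j => if i = j then 2 * A i i else A i j

/-- The pair of matrices `(A, B)` associated to a hermitian quadratic form on `Sⁿ`:
`A_{ii} = q(eᵢ)`, `A_{ij} = f(eᵢ, eⱼ)` for `i ≠ j`, and `B_{ij} = f(eᵢ, Π·eⱼ)`. -/
noncomputable def toMatrices {R : Type} [CommRing R] {t π : R} {n : ℕ}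
    {σ : Squad R t π → Squad R t π} {Nrm : Squad R t π → R}
    (h : HermitianQuadForm R (Squad R t π) σ Nrm (Fin n → Squad R t π)) :
    Matrix (Fin n) (Fin n) R × Matrix (Fin n) (Fin n) R :=
  (Matrix.of fun i j => if i = j then h.q (Pi.single i (1 : Squad R t π))
      else h.f (Pi.single i (1 : Squad R t π)) (Pi.single j (1 : Squad R t π)),
   Matrix.of fun i j => h.f (Pi.single i (1 : Squad R t π))
      (PiRoot R t π • (Pi.single j (1 : Squad R t π) : Fin n → Squad R t π)))

namespace SquadAux

variable {R : Type} [CommRing R] (t π : R)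

lemma qpoly_eq : (X ^ 2 - C t * X + C π : R[X]) = X ^ 2 + (C (-t) * X + C π) := by
  rw [map_neg]; ring

lemma qmonic : (X ^ 2 - C t * X + C π : R[X]).Monic := by
  rw [qpoly_eq]
  exact Polynomial.monic_X_pow_add (degree_linear_le.trans_lt (by norm_num))

lemma qdeg [Nontrivial R] : (X ^ 2 - C t * X + C π : R[X]).degree = 2 := by
  rw [qpoly_eq]
  have h : (C (-t) * X + C π).degree < (X ^ 2 : R[X]).degree := by
    rw [Polynomial.degree_X_pow]
    exact degree_linear_le.trans_lt (by norm_num)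
  rw [Polynomial.degree_add_eq_left_of_degree_lt h, Polynomial.degree_X_pow]
  norm_num

lemma squad_subsingleton (h : Subsingleton R) : Subsingleton (Squad R t π) := by
  constructor
  intro a b
  induction a using AdjoinRoot.induction_on with
  | ih p =>
  induction b using AdjoinRoot.induction_on with
  | ih q =>
  exact congrArg _ (Subsingleton.elim _ _)

/-- first coordinate -/
noncomputable def al (x : Squad R t π) : R :=
  (AdjoinRoot.modByMonicHom (qmonic t π) x).coeff 0

/-- second coordinate -/
noncomputable def be (x : Squad R t π) : R :=
  (AdjoinRoot.modByMonicHom (qmonic t π) x).coeff 1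

variable {t π}

lemma al_add (x y : Squad R t π) : al t π (x + y) = al t π x + al t π y := by
  unfold al; rw [map_add, Polynomial.coeff_add]

lemma be_add (x y : Squad R t π) : be t π (x + y) = be t π x + be t π y := by
  unfold be; rw [map_add, Polynomial.coeff_add]

lemma al_rsmul (r : R) (x : Squad R t π) :
    al t π (algebraMap R (Squad R t π) r * x) = r * al t π x := by
  unfold al
  rw [← Algebra.smul_def, map_smul, Polynomial.coeff_smul, smul_eq_mul]

lemma be_rsmul (r : R) (x : Squad R t π) :
    be t π (algebraMap R (Squad R t π) r * x) = r * be t π x := by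
  unfold be
  rw [← Algebra.smul_def, map_smul, Polynomial.coeff_smul, smul_eq_mul]

lemma lin_deg_le (a b : R) : (C a + C b * X).degree ≤ 1 := by
  rw [add_comm]; exact degree_linear_le

lemma mk_lin (a b : R) :
    algebraMap R (Squad R t π) a + algebraMap R (Squad R t π) b * PiRoot R t π
      = AdjoinRoot.mk _ (C a + C b * X) := by
  rw [map_add, map_mul, AdjoinRoot.mk_C, AdjoinRoot.mk_C, AdjoinRoot.mk_X]
  rfl

lemma al_coords (a b : R) :
    al t π (algebraMap R (Squad R t π) a + algebraMap R (Squad R t π) b * PiRoot R t π) = a := by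
  rcases subsingleton_or_nontrivial R with hs | hnt
  · exact Subsingleton.elim _ _
  unfold al
  rw [mk_lin, AdjoinRoot.modByMonicHom_mk]
  rw [(Polynomial.modByMonic_eq_self_iff (qmonic t π)).2]
  · simp
  · rw [qdeg]
    exact (lin_deg_le a b).trans_lt (by norm_num)

lemma be_coords (a b : R) :
    be t π (algebraMap R (Squad R t π) a + algebraMap R (Squad R t π) b * PiRoot R t π) = b := by
  rcases subsingleton_or_nontrivial R with hs | hnt
  · exact Subsingleton.elim _ _
  unfold be
  rw [mk_lin, AdjoinRoot.modByMonicHom_mk]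
  rw [(Polynomial.modByMonic_eq_self_iff (qmonic t π)).2]
  · simp
  · rw [qdeg]
    exact (lin_deg_le a b).trans_lt (by norm_num)

lemma repr_eq (x : Squad R t π) :
    x = algebraMap R (Squad R t π) (al t π x)
      + algebraMap R (Squad R t π) (be t π x) * PiRoot R t π := by
  rcases subsingleton_or_nontrivial R with hs | hnt
  · haveI := squad_subsingleton t π hs
    exact Subsingleton.elim _ _
  rw [mk_lin]
  conv_lhs => rw [← AdjoinRoot.mk_leftInverse (qmonic t π) x]
  congr 1
  set r := AdjoinRoot.modByMonicHom (qmonic t π) x with hr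
  have hdeg : r.degree ≤ 1 := by
    induction x using AdjoinRoot.induction_on with
    | ih p =>
      rw [hr, AdjoinRoot.modByMonicHom_mk]
      have := Polynomial.degree_modByMonic_lt p (qmonic t π)
      rw [qdeg] at this
      exact Order.le_of_lt_succ (by exact_mod_cast this)
  conv_lhs => rw [Polynomial.eq_X_add_C_of_degree_le_one hdeg]
  show C (be t π x) * X + C (al t π x) = _
  rw [add_comm]

lemma algebraMap_inj (a b : R)
    (h : algebraMap R (Squad R t π) a = algebraMap R (Squad R t π) b) : a = b := by
  have ha := al_coords (t := t) (π := π) a 0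
  have hb := al_coords (t := t) (π := π) b 0
  simp only [map_zero, zero_mul, add_zero] at ha hb
  rw [← ha, ← hb, h]

lemma Pisq : (PiRoot R t π) ^ 2
    = algebraMap R (Squad R t π) t * PiRoot R t π - algebraMap R (Squad R t π) π := by
  have h : AdjoinRoot.mk (X ^ 2 - C t * X + C π) (X ^ 2 - C t * X + C π) = 0 :=
    AdjoinRoot.mk_self
  rw [map_add, map_sub, map_mul, map_pow, AdjoinRoot.mk_C, AdjoinRoot.mk_C,
    AdjoinRoot.mk_X] at h
  have : (PiRoot R t π) ^ 2 - algebraMap R (Squad R t π) t * PiRoot R t π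
      + algebraMap R (Squad R t π) π = 0 := h
  linear_combination this

lemma al_mul (x y : Squad R t π) :
    al t π (x * y) = al t π x * al t π y - π * be t π x * be t π y := by
  have hx := repr_eq x
  have hy := repr_eq y
  set a := al t π x; set b := be t π x; set c := al t π y; set d := be t π y
  have hxy : x * y = algebraMap R (Squad R t π) (a * c - π * (b * d))
      + algebraMap R (Squad R t π) (a * d + b * c + t * (b * d)) * PiRoot R t π := by
    rw [hx, hy]
    simp only [map_add, map_sub, map_mul]
    linear_combination (algebraMap R (Squad R t π) b * algebraMap R (Squad R t π) d) * (Pisq (t := t) (π := π))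
  rw [hxy, al_coords]; ring

lemma be_mul (x y : Squad R t π) :
    be t π (x * y) = al t π x * be t π y + be t π x * al t π y + t * be t π x * be t π y := by
  have hx := repr_eq x
  have hy := repr_eq y
  set a := al t π x; set b := be t π x; set c := al t π y; set d := be t π y
  have hxy : x * y = algebraMap R (Squad R t π) (a * c - π * (b * d))
      + algebraMap R (Squad R t π) (a * d + b * c + t * (b * d)) * PiRoot R t π := by
    rw [hx, hy]
    simp only [map_add, map_sub, map_mul]
    linear_combination (algebraMap R (Squad R t π) b * algebraMap R (Squad R t π) d) * (Pisq (t := t) (π := π))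
  rw [hxy, be_coords]; ring

lemma al_one : al t π (1 : Squad R t π) = 1 := by
  have : (1 : Squad R t π) = algebraMap R (Squad R t π) 1
      + algebraMap R (Squad R t π) 0 * PiRoot R t π := by simp
  rw [this, al_coords]

lemma be_one : be t π (1 : Squad R t π) = 0 := by
  have : (1 : Squad R t π) = algebraMap R (Squad R t π) 1
      + algebraMap R (Squad R t π) 0 * PiRoot R t π := by simp
  rw [this, be_coords]

lemma al_zero : al t π (0 : Squad R t π) = 0 := by unfold al; simp

lemma be_zero : be t π (0 : Squad R t π) = 0 := by unfold be; simp

lemma al_root : al t π (PiRoot R t π) = 0 := by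
  have : (PiRoot R t π) = algebraMap R (Squad R t π) 0
      + algebraMap R (Squad R t π) 1 * PiRoot R t π := by simp
  rw [this, al_coords]

lemma be_root : be t π (PiRoot R t π) = 1 := by
  have : (PiRoot R t π) = algebraMap R (Squad R t π) 0
      + algebraMap R (Squad R t π) 1 * PiRoot R t π := by simp
  rw [this, be_coords]

end SquadAux

namespace SquadAux

variable {R : Type} [CommRing R] {t π : R}

/-- norm formula -/
noncomputable def nf (t π : R) (x : Squad R t π) : R :=
  al t π x ^ 2 + t * (al t π x * be t π x) + π * be t π x ^ 2

/-- model bilinear coefficient function -/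
noncomputable def gg {n : ℕ} (t π : R) (Fm Bm : Matrix (Fin n) (Fin n) R)
    (x y : Squad R t π) (i j : Fin n) : R :=
  (al t π x * al t π y + π * (be t π x * be t π y)) * Fm i j
    + al t π x * be t π y * Bm i j + be t π x * al t π y * Bm j i

lemma nf_mul (x y : Squad R t π) : nf t π (x * y) = nf t π x * nf t π y := by
  unfold nf
  rw [al_mul, be_mul]
  ring

lemma nf_one : nf t π (1 : Squad R t π) = 1 := by
  unfold nf; rw [al_one, be_one]; ring

lemma nf_zero : nf t π (0 : Squad R t π) = 0 := by
  unfold nf; rw [al_zero, be_zero]; ring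

lemma gg_symm {n : ℕ} (Fm Bm : Matrix (Fin n) (Fin n) R) (hF : ∀ i j, Fm i j = Fm j i)
    (x y : Squad R t π) (i j : Fin n) :
    gg t π Fm Bm x y i j = gg t π Fm Bm y x j i := by
  unfold gg; rw [hF i j]; ring

lemma gg_zero_left {n : ℕ} (Fm Bm : Matrix (Fin n) (Fin n) R) (y : Squad R t π) (i j : Fin n) :
    gg t π Fm Bm 0 y i j = 0 := by
  unfold gg; rw [al_zero, be_zero]; ring

lemma gg_zero_right {n : ℕ} (Fm Bm : Matrix (Fin n) (Fin n) R) (y : Squad R t π) (i j : Fin n) :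
    gg t π Fm Bm y 0 i j = 0 := by
  unfold gg; rw [al_zero, be_zero]; ring

lemma gg_add_left {n : ℕ} (Fm Bm : Matrix (Fin n) (Fin n) R) (x x' y : Squad R t π) (i j : Fin n) :
    gg t π Fm Bm (x + x') y i j = gg t π Fm Bm x y i j + gg t π Fm Bm x' y i j := by
  unfold gg; rw [al_add, be_add]; ring

lemma gg_add_right {n : ℕ} (Fm Bm : Matrix (Fin n) (Fin n) R) (x y y' : Squad R t π) (i j : Fin n) :
    gg t π Fm Bm x (y + y') i j = gg t π Fm Bm x y i j + gg t π Fm Bm x y' i j := by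
  unfold gg; rw [al_add, be_add]; ring

lemma gg_rsmul_left {n : ℕ} (Fm Bm : Matrix (Fin n) (Fin n) R) (r : R) (x y : Squad R t π)
    (i j : Fin n) :
    gg t π Fm Bm (algebraMap R (Squad R t π) r * x) y i j = r * gg t π Fm Bm x y i j := by
  unfold gg; rw [al_rsmul, be_rsmul]; ring

lemma gg_smul {n : ℕ} (Fm Bm : Matrix (Fin n) (Fin n) R) (i j : Fin n)
    (hBt : Bm i j + Bm j i = t * Fm i j) (z x y : Squad R t π) :
    gg t π Fm Bm (z * x) (z * y) i j = nf t π z * gg t π Fm Bm x y i j := by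
  unfold gg nf
  rw [al_mul, be_mul, al_mul, be_mul]
  have hB' : Bm j i = t * Fm i j - Bm i j := by linear_combination hBt
  rw [hB']
  ring

lemma gg_conj {n : ℕ} (Fm Bm : Matrix (Fin n) (Fin n) R) (i j : Fin n)
    (hBt : Bm i j + Bm j i = t * Fm i j) (z w x y : Squad R t π)
    (hw1 : al t π w = al t π z + t * be t π z) (hw2 : be t π w = -(be t π z)) :
    gg t π Fm Bm (z * x) y i j = gg t π Fm Bm x (w * y) i j := by
  unfold gg
  rw [al_mul, be_mul, al_mul, be_mul, hw1, hw2]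
  have hB' : Bm j i = t * Fm i j - Bm i j := by linear_combination hBt
  rw [hB']
  ring

lemma gg_diag {n : ℕ} (Am Bm : Matrix (Fin n) (Fin n) R) (j : Fin n)
    (hBd : Bm j j = t * Am j j) (x y : Squad R t π) :
    gg t π (tildeMat Am) Bm x y j j
      = (2 * (al t π x * al t π y) + t * (al t π x * be t π y + be t π x * al t π y)
          + 2 * π * (be t π x * be t π y)) * Am j j := by
  unfold gg
  have hF : tildeMat Am j j = 2 * Am j j := by simp [tildeMat]
  rw [hF, hBd]
  ring

end SquadAux

namespace SquadAux

variable {R : Type} [CommRing R] {t π : R} {n : ℕ}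

/-- cross term of the norm form -/
noncomputable def cr (t π : R) (x y : Squad R t π) : R :=
  2 * (al t π x * al t π y) + t * (al t π x * be t π y + be t π x * al t π y)
    + 2 * π * (be t π x * be t π y)

lemma nf_add (x y : Squad R t π) : nf t π (x + y) = nf t π x + nf t π y + cr t π x y := by
  unfold nf cr; rw [al_add, be_add]; ring

lemma gg_diag' (Am Bm : Matrix (Fin n) (Fin n) R) (j : Fin n)
    (hBd : Bm j j = t * Am j j) (x y : Squad R t π) :
    gg t π (tildeMat Am) Bm x y j j = cr t π x y * Am j j := by
  rw [gg_diag Am Bm j hBd]; unfold cr; ring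

/-- the model quadratic form -/
noncomputable def qq (t π : R) {n : ℕ} (Am Bm : Matrix (Fin n) (Fin n) R)
    (m : Fin n → Squad R t π) : R :=
  ∑ j, ∑ i, (if i = j then nf t π (m i) * Am i i
    else if i < j then gg t π (tildeMat Am) Bm (m i) (m j) i j else 0)

/-- the model bilinear form -/
noncomputable def ffm (t π : R) {n : ℕ} (Am Bm : Matrix (Fin n) (Fin n) R)
    (m n' : Fin n → Squad R t π) : R :=
  ∑ j, ∑ i, gg t π (tildeMat Am) Bm (m i) (n' j) i j

lemma tilde_symm (Am : Matrix (Fin n) (Fin n) R) (hA : ∀ i j, Am i j = Am j i) :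
    ∀ i j, tildeMat Am i j = tildeMat Am j i := by
  intro i j
  by_cases h : i = j
  · subst h; rfl
  · simp [tildeMat, h, Ne.symm h, hA i j]

lemma ffm_symm (Am Bm : Matrix (Fin n) (Fin n) R) (hA : ∀ i j, Am i j = Am j i)
    (m n' : Fin n → Squad R t π) : ffm t π Am Bm m n' = ffm t π Am Bm n' m := by
  unfold ffm
  rw [Finset.sum_comm]
  exact Finset.sum_congr rfl fun j _ => Finset.sum_congr rfl fun i _ =>
    gg_symm _ _ (tilde_symm Am hA) _ _ _ _

lemma ffm_add_left (Am Bm : Matrix (Fin n) (Fin n) R) (m m' n' : Fin n → Squad R t π) :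
    ffm t π Am Bm (m + m') n' = ffm t π Am Bm m n' + ffm t π Am Bm m' n' := by
  unfold ffm
  rw [← Finset.sum_add_distrib]
  refine Finset.sum_congr rfl fun j _ => ?_
  rw [← Finset.sum_add_distrib]
  refine Finset.sum_congr rfl fun i _ => ?_
  exact gg_add_left _ _ _ _ _ _ _

lemma ffm_rsmul_left (Am Bm : Matrix (Fin n) (Fin n) R) (r : R) (m n' : Fin n → Squad R t π) :
    ffm t π Am Bm (fun i => algebraMap R (Squad R t π) r * m i) n'
      = r * ffm t π Am Bm m n' := by
  unfold ffm
  rw [Finset.mul_sum]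
  refine Finset.sum_congr rfl fun j _ => ?_
  rw [Finset.mul_sum]
  refine Finset.sum_congr rfl fun i _ => ?_
  exact gg_rsmul_left _ _ _ _ _ _ _

lemma polar_model (Am Bm : Matrix (Fin n) (Fin n) R) (hA : ∀ i j, Am i j = Am j i)
    (hBd : ∀ j, Bm j j = t * Am j j) (m n' : Fin n → Squad R t π) :
    ffm t π Am Bm m n'
      = qq t π Am Bm (m + n') - qq t π Am Bm m - qq t π Am Bm n' := by
  have h1 : qq t π Am Bm (m + n') = qq t π Am Bm m + qq t π Am Bm n'
      + ∑ j, ∑ i, (if i = j then cr t π (m i) (n' i) * Am i i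
          else if i < j then gg t π (tildeMat Am) Bm (m i) (n' j) i j
            + gg t π (tildeMat Am) Bm (n' i) (m j) i j else 0) := by
    unfold qq
    rw [← Finset.sum_add_distrib, ← Finset.sum_add_distrib]
    refine Finset.sum_congr rfl fun j _ => ?_
    rw [← Finset.sum_add_distrib, ← Finset.sum_add_distrib]
    refine Finset.sum_congr rfl fun i _ => ?_
    by_cases hij : i = j
    · subst hij
      simp only [if_pos rfl, if_true, Pi.add_apply]
      rw [nf_add]; ring
    · simp only [if_neg hij]
      by_cases hlt : i < j
      · simp only [if_pos hlt, if_true, Pi.add_apply]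
        rw [gg_add_left, gg_add_right, gg_add_right]
        ring
      · simp only [if_neg hlt]; ring
  have h2 : ffm t π Am Bm m n'
      = ∑ j, ∑ i, (if i = j then cr t π (m i) (n' i) * Am i i
          else if i < j then gg t π (tildeMat Am) Bm (m i) (n' j) i j
            + gg t π (tildeMat Am) Bm (n' i) (m j) i j else 0) := by
    unfold ffm
    have split1 : (∑ j, ∑ i, gg t π (tildeMat Am) Bm (m i) (n' j) i j)
        = (∑ j, ∑ i, (if i = j then cr t π (m i) (n' i) * Am i i else 0))
          + ((∑ j, ∑ i, (if i < j then gg t π (tildeMat Am) Bm (m i) (n' j) i j else 0))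
          + (∑ j, ∑ i, (if j < i then gg t π (tildeMat Am) Bm (m i) (n' j) i j else 0))) := by
      simp only [← Finset.sum_add_distrib]
      refine Finset.sum_congr rfl fun j _ => Finset.sum_congr rfl fun i _ => ?_
      rcases lt_trichotomy i j with h | h | h
      · simp [h.ne, h, asymm h]
      · subst h
        rw [if_pos rfl, if_neg (lt_irrefl i), gg_diag' Am Bm i (hBd i)]
        ring
      · simp [Ne.symm h.ne, h, asymm h, not_lt_of_gt h]
    have swap : (∑ j, ∑ i, (if j < i then gg t π (tildeMat Am) Bm (m i) (n' j) i j else 0))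
        = ∑ j, ∑ i, (if i < j then gg t π (tildeMat Am) Bm (n' i) (m j) i j else 0) := by
      calc (∑ j, ∑ i, (if j < i then gg t π (tildeMat Am) Bm (m i) (n' j) i j else 0))
          = ∑ j, ∑ i, (if j < i then gg t π (tildeMat Am) Bm (n' j) (m i) j i else 0) := by
            refine Finset.sum_congr rfl fun j _ => Finset.sum_congr rfl fun i _ => ?_
            by_cases h : j < i
            · rw [if_pos h, if_pos h, gg_symm _ _ (tilde_symm Am hA)]
            · rw [if_neg h, if_neg h]
        _ = ∑ i, ∑ j, (if j < i then gg t π (tildeMat Am) Bm (n' j) (m i) j i else 0) :=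
            Finset.sum_comm
    have split2 : (∑ j, ∑ i, (if i = j then cr t π (m i) (n' i) * Am i i
          else if i < j then gg t π (tildeMat Am) Bm (m i) (n' j) i j
            + gg t π (tildeMat Am) Bm (n' i) (m j) i j else 0))
        = (∑ j, ∑ i, (if i = j then cr t π (m i) (n' i) * Am i i else 0))
          + ((∑ j, ∑ i, (if i < j then gg t π (tildeMat Am) Bm (m i) (n' j) i j else 0))
          + (∑ j, ∑ i, (if i < j then gg t π (tildeMat Am) Bm (n' i) (m j) i j else 0))) := by
      simp only [← Finset.sum_add_distrib]
      refine Finset.sum_congr rfl fun j _ => Finset.sum_congr rfl fun i _ => ?_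
      rcases lt_trichotomy i j with h | h | h
      · simp [h.ne, h, asymm h]
      · subst h; simp
      · simp [Ne.symm h.ne, h, asymm h, not_lt_of_gt h]
    rw [split1, swap, split2]
  rw [h2, h1]; ring

lemma qq_smul_model (Am Bm : Matrix (Fin n) (Fin n) R)
    (hBt : ∀ i j, Bm i j + Bm j i = t * tildeMat Am i j)
    (x : Squad R t π) (m : Fin n → Squad R t π) :
    qq t π Am Bm (fun i => x * m i) = nf t π x * qq t π Am Bm m := by
  unfold qq
  rw [Finset.mul_sum]
  refine Finset.sum_congr rfl fun j _ => ?_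
  rw [Finset.mul_sum]
  refine Finset.sum_congr rfl fun i _ => ?_
  by_cases hij : i = j
  · subst hij
    rw [if_pos rfl, if_pos rfl, nf_mul]; ring
  · rw [if_neg hij, if_neg hij]
    by_cases hlt : i < j
    · rw [if_pos hlt, if_pos hlt]
      exact gg_smul _ _ i j (hBt i j) x (m i) (m j)
    · rw [if_neg hlt, if_neg hlt, mul_zero]

lemma ffm_conj_model (Am Bm : Matrix (Fin n) (Fin n) R)
    (hBt : ∀ i j, Bm i j + Bm j i = t * tildeMat Am i j)
    (z w : Squad R t π) (hw1 : al t π w = al t π z + t * be t π z)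
    (hw2 : be t π w = -(be t π z)) (m n' : Fin n → Squad R t π) :
    ffm t π Am Bm (fun i => z * m i) n' = ffm t π Am Bm m (fun j => w * n' j) := by
  unfold ffm
  refine Finset.sum_congr rfl fun j _ => Finset.sum_congr rfl fun i _ => ?_
  exact gg_conj _ _ i j (hBt i j) z w (m i) (n' j) hw1 hw2

lemma qq_single (Am Bm : Matrix (Fin n) (Fin n) R) (i : Fin n) (x : Squad R t π) :
    qq t π Am Bm (Pi.single i x) = nf t π x * Am i i := by
  unfold qq
  have key : ∀ b a : Fin n, (if a = b then nf t π ((Pi.single i x : Fin n → Squad R t π) a) * Am a a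
      else if a < b then gg t π (tildeMat Am) Bm ((Pi.single i x : Fin n → Squad R t π) a) ((Pi.single i x : Fin n → Squad R t π) b) a b else 0)
      = if a = i ∧ a = b then nf t π x * Am i i else 0 := by
    intro b a
    by_cases hab : a = b
    · subst hab
      by_cases hai : a = i
      · subst hai
        rw [if_pos rfl, Pi.single_eq_same, if_pos ⟨rfl, rfl⟩]
      · rw [if_pos rfl, Pi.single_eq_of_ne hai, nf_zero, zero_mul,
          if_neg (show ¬(a = i ∧ a = a) from fun hc => hai hc.1)]
    · rw [if_neg hab, if_neg (show ¬(a = i ∧ a = b) from fun hc => hab hc.2)]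
      by_cases hlt : a < b
      · rw [if_pos hlt]
        by_cases hai : a = i
        · have hbi : b ≠ i := fun h => hab (hai.trans h.symm)
          rw [Pi.single_eq_of_ne hbi, gg_zero_right]
        · rw [Pi.single_eq_of_ne hai, gg_zero_left]
      · rw [if_neg hlt]
  rw [Finset.sum_congr rfl fun b _ => Finset.sum_congr rfl fun a _ => key b a]
  simp [ite_and]

lemma ffm_single (Am Bm : Matrix (Fin n) (Fin n) R) (i j : Fin n) (x y : Squad R t π) :
    ffm t π Am Bm (Pi.single i x) (Pi.single j y) = gg t π (tildeMat Am) Bm x y i j := by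
  unfold ffm
  have key : ∀ b a : Fin n, gg t π (tildeMat Am) Bm ((Pi.single i x : Fin n → Squad R t π) a) ((Pi.single j y : Fin n → Squad R t π) b) a b
      = if a = i ∧ b = j then gg t π (tildeMat Am) Bm x y i j else 0 := by
    intro b a
    by_cases hai : a = i
    · by_cases hbj : b = j
      · subst hai; subst hbj
        rw [Pi.single_eq_same, Pi.single_eq_same, if_pos ⟨rfl, rfl⟩]
      · rw [Pi.single_eq_of_ne hbj, gg_zero_right,
          if_neg (show ¬(a = i ∧ b = j) from fun hc => hbj hc.2)]
    · rw [Pi.single_eq_of_ne hai, gg_zero_left,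
        if_neg (show ¬(a = i ∧ b = j) from fun hc => hai hc.1)]
  rw [Finset.sum_congr rfl fun b _ => Finset.sum_congr rfl fun a _ => key b a]
  simp [ite_and]

end SquadAux

namespace SquadAux

variable {R : Type} [CommRing R] {t π : R} {n : ℕ}
variable {σA : Squad R t π →ₐ[R] Squad R t π} {Nrm : Squad R t π → R}

lemma sigma_repr (hσ : σA (PiRoot R t π) = algebraMap R (Squad R t π) t - PiRoot R t π)
    (x : Squad R t π) :
    σA x = algebraMap R (Squad R t π) (al t π x + t * be t π x)
      + algebraMap R (Squad R t π) (-(be t π x)) * PiRoot R t π := by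
  conv_lhs => rw [repr_eq x]
  rw [map_add, map_mul, AlgHom.commutes, AlgHom.commutes, hσ]
  simp only [map_add, map_mul, map_neg]
  ring

lemma al_sigma (hσ : σA (PiRoot R t π) = algebraMap R (Squad R t π) t - PiRoot R t π)
    (x : Squad R t π) : al t π (σA x) = al t π x + t * be t π x := by
  rw [sigma_repr hσ, al_coords]

lemma be_sigma (hσ : σA (PiRoot R t π) = algebraMap R (Squad R t π) t - PiRoot R t π)
    (x : Squad R t π) : be t π (σA x) = -(be t π x) := by
  rw [sigma_repr hσ, be_coords]

lemma Nrm_eq_nf (hσ : σA (PiRoot R t π) = algebraMap R (Squad R t π) t - PiRoot R t π)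
    (hN : ∀ x : Squad R t π, x * σA x = algebraMap R (Squad R t π) (Nrm x))
    (x : Squad R t π) : Nrm x = nf t π x := by
  have hx := repr_eq x
  apply algebraMap_inj
  rw [← hN x, sigma_repr hσ x]
  unfold nf
  set a := al t π x with ha
  set b := be t π x with hb
  rw [hx]
  simp only [map_add, map_mul, map_neg, map_pow]
  linear_combination (-(algebraMap R (Squad R t π) b)
    * algebraMap R (Squad R t π) b) * (Pisq (t := t) (π := π))

lemma sigmaPi_mul_Pi (hσ : σA (PiRoot R t π) = algebraMap R (Squad R t π) t - PiRoot R t π) :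
    σA (PiRoot R t π) * PiRoot R t π = algebraMap R (Squad R t π) π := by
  rw [hσ]
  linear_combination -(Pisq (t := t) (π := π))

lemma single_smul (x : Squad R t π) (i : Fin n) :
    x • (Pi.single i 1 : Fin n → Squad R t π) = Pi.single i x := by
  funext k
  by_cases hk : k = i
  · subst hk; simp
  · simp [Pi.single_eq_of_ne hk]

lemma sum_single (m : Fin n → Squad R t π) : ∑ j, Pi.single j (m j) = m := by
  funext k
  rw [Finset.sum_apply]
  simp [Pi.single_apply]

section Generic

variable (h : HermitianQuadForm R (Squad R t π) (⇑σA) Nrm (Fin n → Squad R t π))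

lemma f_add_right (m u v : Fin n → Squad R t π) :
    h.f m (u + v) = h.f m u + h.f m v := by
  rw [h.f_symm, h.f_add_left, h.f_symm u m, h.f_symm v m]

lemma f_zero_right (m : Fin n → Squad R t π) : h.f m 0 = 0 := by
  have h1 := f_add_right h m 0 0
  rw [add_zero] at h1
  linear_combination -h1

lemma f_rsmul_right (r : R) (m u : Fin n → Squad R t π) :
    h.f m ((algebraMap R (Squad R t π) r) • u) = r * h.f m u := by
  rw [h.f_symm, h.f_smul_left, h.f_symm u m]

lemma f_sum_right (m : Fin n → Squad R t π) (s : Finset (Fin n))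
    (v : Fin n → Fin n → Squad R t π) :
    h.f m (∑ j ∈ s, v j) = ∑ j ∈ s, h.f m (v j) := by
  induction s using Finset.induction_on with
  | empty => simpa using f_zero_right h m
  | insert _ _ hnotmem ih =>
    rw [Finset.sum_insert hnotmem, Finset.sum_insert hnotmem, f_add_right h, ih]

lemma q_zero (hσ : σA (PiRoot R t π) = algebraMap R (Squad R t π) t - PiRoot R t π)
    (hN : ∀ x : Squad R t π, x * σA x = algebraMap R (Squad R t π) (Nrm x)) :
    h.q 0 = 0 := by
  have h1 : h.q ((0 : Squad R t π) • (0 : Fin n → Squad R t π)) = Nrm 0 * h.q 0 :=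
    h.q_smul 0 0
  rw [zero_smul, Nrm_eq_nf hσ hN, nf_zero, zero_mul] at h1
  exact h1

lemma q_add (m u : Fin n → Squad R t π) :
    h.q (m + u) = h.q m + h.q u + h.f m u := by
  have h1 := h.polar m u
  linear_combination -h1

lemma Nrm_two (hσ : σA (PiRoot R t π) = algebraMap R (Squad R t π) t - PiRoot R t π)
    (hN : ∀ x : Squad R t π, x * σA x = algebraMap R (Squad R t π) (Nrm x)) :
    Nrm (2 : Squad R t π) = 4 := by
  rw [Nrm_eq_nf hσ hN]
  have h2 : (2 : Squad R t π) = 1 + 1 := by norm_num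
  rw [h2]
  unfold nf
  rw [al_add, be_add, al_one, be_one]
  ring

lemma Nrm_onePi (hσ : σA (PiRoot R t π) = algebraMap R (Squad R t π) t - PiRoot R t π)
    (hN : ∀ x : Squad R t π, x * σA x = algebraMap R (Squad R t π) (Nrm x)) :
    Nrm (1 + PiRoot R t π) = 1 + t + π := by
  rw [Nrm_eq_nf hσ hN]
  unfold nf
  rw [al_add, be_add, al_one, be_one, al_root, be_root]
  ring

lemma Nrm_Pi (hσ : σA (PiRoot R t π) = algebraMap R (Squad R t π) t - PiRoot R t π)
    (hN : ∀ x : Squad R t π, x * σA x = algebraMap R (Squad R t π) (Nrm x)) :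
    Nrm (PiRoot R t π) = π := by
  rw [Nrm_eq_nf hσ hN]
  unfold nf
  rw [al_root, be_root]
  ring

/-- `f(eᵢ, eᵢ) = 2 q(eᵢ)` -/
lemma key1 (hσ : σA (PiRoot R t π) = algebraMap R (Squad R t π) t - PiRoot R t π)
    (hN : ∀ x : Squad R t π, x * σA x = algebraMap R (Squad R t π) (Nrm x)) (i : Fin n) :
    h.f (Pi.single i 1) (Pi.single i 1) = 2 * h.q (Pi.single i 1) := by
  have h1 := h.polar (Pi.single i 1) (Pi.single i 1)
  have h2 : (Pi.single i 1 : Fin n → Squad R t π) + Pi.single i 1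
      = (2 : Squad R t π) • (Pi.single i 1 : Fin n → Squad R t π) := (two_smul _ _).symm
  rw [h2, h.q_smul, Nrm_two hσ hN] at h1
  linear_combination h1

/-- `B i j + B j i = t * f(eᵢ, eⱼ)` -/
lemma key2 (hσ : σA (PiRoot R t π) = algebraMap R (Squad R t π) t - PiRoot R t π)
    (i j : Fin n) :
    h.f (Pi.single i 1) (PiRoot R t π • (Pi.single j 1 : Fin n → Squad R t π))
      + h.f (Pi.single j 1) (PiRoot R t π • (Pi.single i 1 : Fin n → Squad R t π))
      = t * h.f (Pi.single i 1) (Pi.single j 1) := by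
  have hsum : (σA (PiRoot R t π) + PiRoot R t π) = algebraMap R (Squad R t π) t := by
    rw [hσ]; ring
  have h1 : t * h.f (Pi.single i 1) (Pi.single j 1)
      = h.f (Pi.single i 1) ((algebraMap R (Squad R t π) t) • (Pi.single j 1 : Fin n → Squad R t π)) :=
    (f_rsmul_right h t _ _).symm
  rw [← hsum, add_smul, f_add_right h] at h1
  have h2 : h.f (Pi.single i 1) (σA (PiRoot R t π) • (Pi.single j 1 : Fin n → Squad R t π))
      = h.f (Pi.single j 1) (PiRoot R t π • (Pi.single i 1 : Fin n → Squad R t π)) := by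
    rw [← h.f_conj, h.f_symm]
  rw [h2] at h1
  linear_combination -h1

/-- `B i i = t * q(eᵢ)` -/
lemma key3 (hσ : σA (PiRoot R t π) = algebraMap R (Squad R t π) t - PiRoot R t π)
    (hN : ∀ x : Squad R t π, x * σA x = algebraMap R (Squad R t π) (Nrm x)) (i : Fin n) :
    h.f (Pi.single i 1) (PiRoot R t π • (Pi.single i 1 : Fin n → Squad R t π)) = t * h.q (Pi.single i 1) := by
  have h1 := h.polar (Pi.single i 1) (PiRoot R t π • (Pi.single i 1 : Fin n → Squad R t π))
  have h2 : (Pi.single i 1 : Fin n → Squad R t π) + PiRoot R t π • (Pi.single i 1 : Fin n → Squad R t π)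
      = (1 + PiRoot R t π) • (Pi.single i 1 : Fin n → Squad R t π) := by
    rw [add_smul, one_smul]
  rw [h2, h.q_smul, h.q_smul, Nrm_onePi hσ hN, Nrm_Pi hσ hN] at h1
  linear_combination h1

/-- expansion of `f` on scaled basis vectors -/
lemma f_expand (hσ : σA (PiRoot R t π) = algebraMap R (Squad R t π) t - PiRoot R t π)
    (x y : Squad R t π) (i j : Fin n) :
    h.f (x • (Pi.single i 1 : Fin n → Squad R t π)) (y • (Pi.single j 1 : Fin n → Squad R t π))
      = al t π x * al t π y * h.f (Pi.single i 1) (Pi.single j 1)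
        + al t π x * be t π y * h.f (Pi.single i 1) (PiRoot R t π • (Pi.single j 1 : Fin n → Squad R t π))
        + be t π x * al t π y * h.f (Pi.single j 1) (PiRoot R t π • (Pi.single i 1 : Fin n → Squad R t π))
        + π * (be t π x * be t π y) * h.f (Pi.single i 1) (Pi.single j 1) := by
  have hPP : h.f (PiRoot R t π • (Pi.single i 1 : Fin n → Squad R t π)) (PiRoot R t π • (Pi.single j 1 : Fin n → Squad R t π))
      = π * h.f (Pi.single i 1) (Pi.single j 1) := by
    rw [h.f_conj, ← mul_smul, sigmaPi_mul_Pi hσ, f_rsmul_right h]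
  have hPe : h.f (PiRoot R t π • (Pi.single i 1 : Fin n → Squad R t π)) (Pi.single j 1)
      = h.f (Pi.single j 1) (PiRoot R t π • (Pi.single i 1 : Fin n → Squad R t π)) := h.f_symm _ _
  conv_lhs => rw [repr_eq x, repr_eq y]
  rw [add_smul, add_smul, h.f_add_left, f_add_right h, f_add_right h, mul_smul, mul_smul]
  simp only [h.f_smul_left, f_rsmul_right h]
  rw [hPP, hPe]
  ring

lemma q_single (i : Fin n) (x : Squad R t π) :
    h.q (Pi.single i x) = Nrm x * h.q (Pi.single i 1) := by
  rw [← single_smul, h.q_smul]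

end Generic

end SquadAux

open SquadAux in
theorem statement11 (R : Type) [CommRing R] (t π : R)
    (σ : Squad R t π →ₐ[R] Squad R t π)
    (hσ : σ (PiRoot R t π) = algebraMap R (Squad R t π) t - PiRoot R t π)
    (Nrm : Squad R t π → R)
    (hN : ∀ x : Squad R t π, x * σ x = algebraMap R (Squad R t π) (Nrm x))
    (n : ℕ) (hn : 1 ≤ n) :
    Function.Injective
      (toMatrices (R := R) (t := t) (π := π) (n := n) (σ := ⇑σ) (Nrm := Nrm)) ∧
    Set.range (toMatrices (R := R) (t := t) (π := π) (n := n) (σ := ⇑σ) (Nrm := Nrm)) =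
      {AB : Matrix (Fin n) (Fin n) R × Matrix (Fin n) (Fin n) R |
        AB.1.IsSymm ∧
        AB.2 + AB.2.transpose = t • tildeMat AB.1 ∧
        ∀ i, AB.2 i i = t * AB.1 i i} := by

  classical
  constructor
  · -- injectivity
    intro h₁ h₂ heq
    have hfst : ∀ i j : Fin n,
        (if i = j then h₁.q (Pi.single i 1) else h₁.f (Pi.single i 1) (Pi.single j 1))
          = (if i = j then h₂.q (Pi.single i 1) else h₂.f (Pi.single i 1) (Pi.single j 1)) := by
      intro i j
      have h0 := congrArg (fun P => P.1 i j) heq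
      simpa only [toMatrices, Matrix.of_apply] using h0
    have hsnd : ∀ i j : Fin n,
        h₁.f (Pi.single i 1) (PiRoot R t π • (Pi.single j 1 : Fin n → Squad R t π))
          = h₂.f (Pi.single i 1) (PiRoot R t π • (Pi.single j 1 : Fin n → Squad R t π)) := by
      intro i j
      have h0 := congrArg (fun P => P.2 i j) heq
      simpa only [toMatrices, Matrix.of_apply] using h0
    have hqd : ∀ i, h₁.q (Pi.single i 1) = h₂.q (Pi.single i 1) := by
      intro i
      have h0 := hfst i i
      simpa using h0
    have hfb : ∀ i j, h₁.f (Pi.single i 1) (Pi.single j 1)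
        = h₂.f (Pi.single i 1) (Pi.single j 1) := by
      intro i j
      by_cases hij : i = j
      · subst hij
        rw [key1 h₁ hσ hN i, key1 h₂ hσ hN i, hqd i]
      · have h0 := hfst i j
        simpa [hij] using h0
    have hq : ∀ m, h₁.q m = h₂.q m := by
      intro m
      have main : ∀ s : Finset (Fin n),
          h₁.q (∑ j ∈ s, Pi.single j (m j)) = h₂.q (∑ j ∈ s, Pi.single j (m j)) := by
        intro s
        induction s using Finset.induction_on with
        | empty =>
          simp only [Finset.sum_empty]
          rw [q_zero h₁ hσ hN, q_zero h₂ hσ hN]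
        | @insert a s hna ih =>
          rw [Finset.sum_insert hna, q_add h₁, q_add h₂, ih]
          have e1 : h₁.q (Pi.single a (m a)) = h₂.q (Pi.single a (m a)) := by
            rw [q_single h₁ a (m a), q_single h₂ a (m a), hqd a]
          have e2 : h₁.f (Pi.single a (m a)) (∑ j ∈ s, Pi.single j (m j))
              = h₂.f (Pi.single a (m a)) (∑ j ∈ s, Pi.single j (m j)) := by
            rw [f_sum_right h₁, f_sum_right h₂]
            refine Finset.sum_congr rfl fun j _ => ?_
            rw [← single_smul (m a) a, ← single_smul (m j) j, f_expand h₁ hσ,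
              f_expand h₂ hσ, hfb a j, hsnd a j, hsnd j a]
          rw [e1, e2]
      have h0 := main Finset.univ
      rwa [sum_single m] at h0
    have hQ : h₁.q = h₂.q := funext hq
    have hF : h₁.f = h₂.f := by
      funext m u
      rw [h₁.polar, h₂.polar, hq, hq, hq]
    cases h₁; cases h₂
    simp only at hQ hF
    subst hQ
    subst hF
    rfl
  · -- range
    ext AB
    simp only [Set.mem_range, Set.mem_setOf_eq]
    constructor
    · rintro ⟨h, rfl⟩
      refine ⟨?_, ?_, ?_⟩
      · -- symmetry
        apply Matrix.IsSymm.ext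
        intro i j
        simp only [toMatrices, Matrix.of_apply]
        by_cases hij : i = j
        · subst hij; rfl
        · rw [if_neg (Ne.symm hij), if_neg hij, h.f_symm]
      · -- B + Bᵀ = t Ã
        ext i j
        simp only [toMatrices, Matrix.add_apply, Matrix.transpose_apply, Matrix.of_apply,
          Matrix.smul_apply, smul_eq_mul]
        rw [key2 h hσ i j]
        by_cases hij : i = j
        · subst hij
          rw [key1 h hσ hN i]
          simp [tildeMat]
        · simp [tildeMat, hij]
      · -- diagonal
        intro i
        simp only [toMatrices, Matrix.of_apply, if_pos rfl]
        rw [key3 h hσ hN i]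
        simp
    · rintro ⟨hA, hB2, hBd⟩
      set A := AB.1 with hA1
      set B := AB.2 with hB1
      have hAs : ∀ i j, A i j = A j i := fun i j => hA.apply j i
      have hBt : ∀ i j, B i j + B j i = t * tildeMat A i j := by
        intro i j
        have h0 := congrArg (fun M => M i j) hB2
        simpa only [Matrix.add_apply, Matrix.transpose_apply, Matrix.smul_apply,
          smul_eq_mul] using h0
      refine ⟨⟨qq t π A B, ffm t π A B, ?_, ?_, ?_, ?_, ?_, ?_⟩, ?_⟩
      · exact fun m u => ffm_symm A B hAs m u
      · exact fun m m' u => ffm_add_left A B m m' u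
      · intro r m u
        exact ffm_rsmul_left A B r m u
      · intro m u
        exact polar_model A B hAs hBd m u
      · intro x m
        rw [Nrm_eq_nf hσ hN x]
        exact qq_smul_model A B hBt x m
      · intro x m u
        exact ffm_conj_model A B hBt x (σ x) (al_sigma hσ x) (be_sigma hσ x) m u
      · -- toMatrices of the model is (A, B)
        unfold toMatrices
        refine Prod.ext ?_ ?_ <;> dsimp only
        · ext i j
          simp only [Matrix.of_apply]
          by_cases hij : i = j
          · subst hij
            rw [if_pos rfl, qq_single A B i 1, nf_one, one_mul]
          · rw [if_neg hij, ffm_single A B i j 1 1]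
            have hg : gg t π (tildeMat A) B 1 1 i j = tildeMat A i j := by
              unfold gg
              rw [al_one, be_one]
              ring
            rw [hg]
            simp [tildeMat, hij]
            rfl
        · ext i j
          simp only [Matrix.of_apply]
          rw [single_smul, ffm_single A B i j 1 (PiRoot R t π)]
          unfold gg
          rw [al_one, be_one, al_root, be_root]
          ring
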